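/- (Liouville change of variables, reduction (2.3) → (2.9).) Let c : ℝ → ℝ be three times continuously differentiable with c(y) ≥ 1 for all y. Define φ(y) = ∫₀ʸ √(c(s)) ds and let g : ℝ → ℝ satisfy φ(g(x)) = x and g(φ(y)) = y for all x, y ∈ ℝ. Let u : ℝ × ℝ → ℝ be C² and satisfy c(y)·u_tt(y,t) = u_yy(y,t) for all (y,t) ∈ ℝ². Define S(x) = (c(g(x)))^{−1/4}, v(x,t) = u(g(x),t)·(c(g(x)))^{1/4}, and r(x) = S''(x)/S(x) − 2·(S'(x)/S(x))². Then v_tt(x,t) = v_xx(x,t) + r(x)·v(x,t) for all (x,t) ∈ ℝ². -/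

import Mathlib

open Set

/-- Partial derivative in the first variable. -/
noncomputable def partialX (f : ℝ × ℝ → ℝ) : ℝ × ℝ → ℝ :=
  fun p => deriv (fun x => f (x, p.2)) p.1

/-- Partial derivative in the second variable. -/
noncomputable def partialT (f : ℝ × ℝ → ℝ) : ℝ × ℝ → ℝ :=
  fun p => deriv (fun t => f (p.1, t)) p.2

/-- Liouville change of variables: reduction of c(y)u_tt = u_yy to
    v_tt = v_xx + r(x) v via the travel-time variable x = ∫₀ʸ √c. -/
theorem liouville_reduction
    (c : ℝ → ℝ) (hc : ContDiff ℝ 3 c) (hc1 : ∀ y : ℝ, 1 ≤ c y)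
    (g : ℝ → ℝ)
    (hg1 : ∀ x : ℝ, (∫ s in (0:ℝ)..(g x), Real.sqrt (c s)) = x)
    (hg2 : ∀ y : ℝ, g (∫ s in (0:ℝ)..y, Real.sqrt (c s)) = y)
    (u : ℝ × ℝ → ℝ) (hu : ContDiff ℝ 2 u)
    (hwave : ∀ p : ℝ × ℝ, c p.1 * partialT (partialT u) p = partialX (partialX u) p)
    (S : ℝ → ℝ) (hS : ∀ x : ℝ, S x = (c (g x)) ^ (-(1/4) : ℝ))
    (v : ℝ × ℝ → ℝ)
    (hv : ∀ p : ℝ × ℝ, v p = u (g p.1, p.2) * (c (g p.1)) ^ ((1/4) : ℝ))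
    (r : ℝ → ℝ)
    (hr : ∀ x : ℝ, r x = deriv (deriv S) x / S x - 2 * (deriv S x / S x) ^ 2) :
    ∀ p : ℝ × ℝ, partialT (partialT v) p = partialX (partialX v) p + r p.1 * v p := by
  -- basic positivity
  have hcpos : ∀ y, (0:ℝ) < c y := fun y => lt_of_lt_of_le one_pos (hc1 y)
  have hccont : Continuous c := hc.continuous
  have hhcont : Continuous (fun y => Real.sqrt (c y)) := Real.continuous_sqrt.comp hccont
  have hhpos : ∀ y, 0 < Real.sqrt (c y) := fun y => Real.sqrt_pos.mpr (hcpos y)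
  set φ : ℝ → ℝ := fun y => ∫ s in (0:ℝ)..y, Real.sqrt (c s) with hφ_def
  have hφ : ∀ y, HasDerivAt φ (Real.sqrt (c y)) y := fun y =>
    (hhcont.integral_hasStrictDerivAt 0 y).hasDerivAt
  have hφmono : StrictMono φ := by
    apply strictMono_of_deriv_pos
    intro y
    rw [(hφ y).deriv]
    exact hhpos y
  have hgmono : StrictMono g := by
    intro a b hab
    have hab' : φ (g a) < φ (g b) := by
      rw [show φ (g a) = a from hg1 a, show φ (g b) = b from hg1 b]; exact hab
    exact hφmono.lt_iff_lt.mp hab'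
  have hgsurj : Function.Surjective g := fun y => ⟨φ y, hg2 y⟩
  have hgcont : Continuous g := hgmono.monotone.continuous_of_surjective hgsurj
  have hg' : ∀ x, HasDerivAt g (Real.sqrt (c (g x)))⁻¹ x := fun x =>
    HasDerivAt.of_local_left_inverse hgcont.continuousAt (hφ (g x)) (ne_of_gt (hhpos (g x)))
      (Filter.Eventually.of_forall hg1)
  -- A = c ∘ g
  set A : ℝ → ℝ := fun x => c (g x) with hA_def
  have hApos : ∀ x, (0:ℝ) < A x := fun x => hcpos (g x)
  have hAne : ∀ x, A x ≠ 0 := fun x => ne_of_gt (hApos x)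
  have hsqrtA : ∀ x, (Real.sqrt (c (g x)))⁻¹ = A x ^ (-(1/2) : ℝ) := by
    intro x
    rw [Real.rpow_neg (hApos x).le, Real.sqrt_eq_rpow]
  -- derivative of A
  have hcdiff : Differentiable ℝ c := hc.differentiable (by norm_num)
  have hAd : ∀ x, HasDerivAt A (deriv c (g x) * A x ^ (-(1/2) : ℝ)) x := by
    intro x
    have := ((hcdiff (g x)).hasDerivAt).comp x (hg' x)
    rwa [hsqrtA x] at this
  -- S and its derivative
  have hSfun : S = fun x => A x ^ (-(1/4) : ℝ) := funext hS
  have hSpos : ∀ x, 0 < S x := by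
    intro x; rw [hS x]; exact Real.rpow_pos_of_pos (hApos x) _
  have hSne : ∀ x, S x ≠ 0 := fun x => ne_of_gt (hSpos x)
  set Sd : ℝ → ℝ := fun x =>
    (deriv c (g x) * A x ^ (-(1/2) : ℝ)) * (-(1/4) : ℝ) * A x ^ ((-(1/4) : ℝ) - 1) with hSd_def
  have hSd : ∀ x, HasDerivAt S (Sd x) x := by
    rw [hSfun]
    exact fun x => (hAd x).rpow_const (Or.inl (hAne x))
  have hderivS : deriv S = Sd := funext fun x => (hSd x).deriv
  -- deriv c is C² so Sd is differentiable
  have hc' : ContDiff ℝ (2 + 1 : ℕ) c := by exact_mod_cast hc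
  have hdc : ContDiff ℝ 2 (deriv c) := (contDiff_succ_iff_deriv.mp hc').2.2
  have hdcdiff : Differentiable ℝ (deriv c) := hdc.differentiable (by norm_num)
  have hSdDiff : ∀ x, DifferentiableAt ℝ Sd x := by
    intro x
    have d1 : DifferentiableAt ℝ (fun x => deriv c (g x)) x :=
      (((hdcdiff (g x)).hasDerivAt).comp x (hg' x)).differentiableAt
    have d2 : DifferentiableAt ℝ (fun x => A x ^ (-(1/2) : ℝ)) x :=
      ((hAd x).rpow_const (Or.inl (hAne x))).differentiableAt
    have d3 : DifferentiableAt ℝ (fun x => A x ^ ((-(1/4) : ℝ) - 1)) x :=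
      ((hAd x).rpow_const (Or.inl (hAne x))).differentiableAt
    exact ((d1.mul d2).mul (differentiableAt_const _)).mul d3
  have hSdd : ∀ x, HasDerivAt Sd (deriv Sd x) x := fun x => (hSdDiff x).hasDerivAt
  have hderivderivS : deriv (deriv S) = deriv Sd := by rw [hderivS]
  -- W = A^(1/4) = S⁻¹ and its derivatives
  set W : ℝ → ℝ := fun x => A x ^ ((1/4) : ℝ) with hW_def
  have hWSinv : ∀ x, W x = (S x)⁻¹ := by
    intro x
    rw [hS x, Real.rpow_neg (hApos x).le, inv_inv]
  have hWfun : W = fun x => (S x)⁻¹ := funext hWSinv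
  set Wd : ℝ → ℝ := fun x => -Sd x / S x ^ 2 with hWd_def
  have hWd : ∀ x, HasDerivAt W (Wd x) x := by
    rw [hWfun]
    exact fun x => (hSd x).inv (hSne x)
  set Wdd : ℝ → ℝ := fun x =>
    (-(deriv Sd x) * S x ^ 2 + Sd x * (2 * S x * Sd x)) / S x ^ 4 with hWdd_def
  have hWddH : ∀ x, HasDerivAt Wd (Wdd x) x := by
    intro x
    have H := ((hSdd x).neg).div ((hSd x).pow 2) (pow_ne_zero 2 (hSne x))
    refine H.congr_deriv ?_
    simp only [Pi.pow_apply, Pi.neg_apply]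
    rw [show ((S x ^ 2) ^ 2 : ℝ) = S x ^ 4 by ring]
    push_cast
    ring
  -- key scalar identities
  have hg2S : ∀ x, (Real.sqrt (c (g x)))⁻¹ = S x ^ 2 := by
    intro x
    rw [hsqrtA x, hS x, ← Real.rpow_natCast (A x ^ (-(1/4):ℝ)) 2,
      ← Real.rpow_mul (hApos x).le]
    norm_num
  have hgS : ∀ x, HasDerivAt g (S x ^ 2) x := by
    intro x; have := hg' x; rwa [hg2S x] at this
  have hS4A : ∀ x, A x = (S x ^ 4)⁻¹ := by
    intro x
    rw [hS x, ← Real.rpow_natCast (A x ^ (-(1/4):ℝ)) 4, ← Real.rpow_mul (hApos x).le]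
    norm_num
    rw [Real.rpow_neg_one, inv_inv]
  -- u machinery
  have udiff : Differentiable ℝ u := hu.differentiable (by norm_num)
  set uT : ℝ × ℝ → ℝ := fun p => fderiv ℝ u p (0, 1) with huT_def
  set uX : ℝ × ℝ → ℝ := fun p => fderiv ℝ u p (1, 0) with huX_def
  have huT : ∀ a b : ℝ, HasDerivAt (fun t => u (a, t)) (uT (a, b)) b := by
    intro a b
    exact (udiff (a, b)).hasFDerivAt.comp_hasDerivAt b
      ((hasDerivAt_const b a).prodMk (hasDerivAt_id b))
  have huX : ∀ a b : ℝ, HasDerivAt (fun s => u (s, b)) (uX (a, b)) a := by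
    intro a b
    exact (udiff (a, b)).hasFDerivAt.comp_hasDerivAt a
      ((hasDerivAt_id a).prodMk (hasDerivAt_const a b))
  have hu1 : ContDiff ℝ 1 (fderiv ℝ u) := hu.fderiv_right (by norm_num)
  have huTc : ContDiff ℝ 1 uT := hu1.clm_apply contDiff_const
  have huXc : ContDiff ℝ 1 uX := hu1.clm_apply contDiff_const
  have uTdiff : Differentiable ℝ uT := huTc.differentiable one_ne_zero
  have uXdiff : Differentiable ℝ uX := huXc.differentiable one_ne_zero
  set uTT : ℝ × ℝ → ℝ := fun p => fderiv ℝ uT p (0, 1) with huTT_def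
  set uXX : ℝ × ℝ → ℝ := fun p => fderiv ℝ uX p (1, 0) with huXX_def
  have huTT : ∀ a b : ℝ, HasDerivAt (fun t => uT (a, t)) (uTT (a, b)) b := by
    intro a b
    exact (uTdiff (a, b)).hasFDerivAt.comp_hasDerivAt b
      ((hasDerivAt_const b a).prodMk (hasDerivAt_id b))
  have huXX : ∀ a b : ℝ, HasDerivAt (fun s => uX (s, b)) (uXX (a, b)) a := by
    intro a b
    exact (uXdiff (a, b)).hasFDerivAt.comp_hasDerivAt a
      ((hasDerivAt_id a).prodMk (hasDerivAt_const a b))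
  -- identify the partial derivatives of u
  have hpTu : partialT u = uT := funext fun p => (huT p.1 p.2).deriv
  have hpXu : partialX u = uX := funext fun p => (huX p.1 p.2).deriv
  have hpTTu : ∀ p : ℝ × ℝ, partialT (partialT u) p = uTT p := by
    intro p
    rw [hpTu]
    exact (huTT p.1 p.2).deriv
  have hpXXu : ∀ p : ℝ × ℝ, partialX (partialX u) p = uXX p := by
    intro p
    rw [hpXu]
    exact (huXX p.1 p.2).deriv
  have hwave' : ∀ (a b : ℝ), uXX (a, b) = c a * uTT (a, b) := by
    intro a b
    have := hwave (a, b)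
    rw [hpTTu (a, b), hpXXu (a, b)] at this
    exact this.symm
  -- fderiv applied to (s, 0) is s times value at (1,0)
  have hsmulX : ∀ (f : ℝ × ℝ → ℝ) (q : ℝ × ℝ) (s : ℝ),
      fderiv ℝ f q (s, 0) = s * fderiv ℝ f q (1, 0) := by
    intro f q s
    have hv0 : ((s : ℝ), (0 : ℝ)) = s • ((1 : ℝ), (0 : ℝ)) := by
      simp [Prod.smul_mk]
    rw [hv0, map_smul, smul_eq_mul]
  -- composition with g, in the first variable
  have hug : ∀ (x t : ℝ), HasDerivAt (fun z => u (g z, t)) (uX (g x, t) * S x ^ 2) x := by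
    intro x t
    have hcurve : HasDerivAt (fun z => ((g z : ℝ), t)) ((S x ^ 2 : ℝ), (0 : ℝ)) x :=
      (hgS x).prodMk (hasDerivAt_const x t)
    have H := (udiff (g x, t)).hasFDerivAt.comp_hasDerivAt x hcurve
    rwa [hsmulX u (g x, t) (S x ^ 2), mul_comm] at H
  have huXg : ∀ (x t : ℝ), HasDerivAt (fun z => uX (g z, t)) (uXX (g x, t) * S x ^ 2) x := by
    intro x t
    have hcurve : HasDerivAt (fun z => ((g z : ℝ), t)) ((S x ^ 2 : ℝ), (0 : ℝ)) x :=
      (hgS x).prodMk (hasDerivAt_const x t)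
    have H := (uXdiff (g x, t)).hasFDerivAt.comp_hasDerivAt x hcurve
    rwa [hsmulX uX (g x, t) (S x ^ 2), mul_comm] at H
  -- partial derivatives of v : time direction
  have hvW : ∀ p : ℝ × ℝ, v p = u (g p.1, p.2) * W p.1 := fun p => hv p
  have hpvT : ∀ (x s : ℝ), partialT v (x, s) = uT (g x, s) * W x := by
    intro x s
    have hfun : (fun t => v (x, t)) = fun t => u (g x, t) * W x :=
      funext fun t => hvW (x, t)
    show deriv (fun t => v (x, t)) s = _
    rw [hfun]
    exact ((huT (g x) s).mul_const (W x)).deriv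
  have hpvTT : ∀ (x t : ℝ), partialT (partialT v) (x, t) = uTT (g x, t) * W x := by
    intro x t
    have hfun : (fun s => partialT v (x, s)) = fun s => uT (g x, s) * W x :=
      funext fun s => hpvT x s
    show deriv (fun s => partialT v (x, s)) t = _
    rw [hfun]
    exact ((huTT (g x) t).mul_const (W x)).deriv
  -- partial derivatives of v : space direction
  have hpvX : ∀ (x t : ℝ), partialX v (x, t) =
      uX (g x, t) * S x ^ 2 * W x + u (g x, t) * Wd x := by
    intro x t
    have hfun : (fun z => v (z, t)) = fun z => u (g z, t) * W z :=
      funext fun z => hvW (z, t)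
    show deriv (fun z => v (z, t)) x = _
    rw [hfun]
    exact ((hug x t).mul (hWd x)).deriv
  have hpvXX : ∀ (x t : ℝ), partialX (partialX v) (x, t) =
      ((uXX (g x, t) * S x ^ 2 * (S x ^ 2) + uX (g x, t) * (2 * S x ^ 1 * Sd x)) * W x
        + uX (g x, t) * S x ^ 2 * Wd x)
      + (uX (g x, t) * S x ^ 2 * Wd x + u (g x, t) * Wdd x) := by
    intro x t
    have hfun : (fun z => partialX v (z, t)) =
        fun z => uX (g z, t) * S z ^ 2 * W z + u (g z, t) * Wd z :=
      funext fun z => hpvX z t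
    show deriv (fun z => partialX v (z, t)) x = _
    rw [hfun]
    have t1 : HasDerivAt (fun z => uX (g z, t) * S z ^ 2)
        (uXX (g x, t) * S x ^ 2 * (S x ^ 2) + uX (g x, t) * ((2 : ℕ) * S x ^ 1 * Sd x)) x :=
      (huXg x t).mul ((hSd x).pow 2)
    have t2 : HasDerivAt (fun z => uX (g z, t) * S z ^ 2 * W z + u (g z, t) * Wd z) _ x :=
      (t1.mul (hWd x)).add ((hug x t).mul (hWddH x))
    have := t2.deriv
    rw [this]
    push_cast
    ring
  -- the final computation
  intro p
  obtain ⟨x, t⟩ := p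
  rw [hpvTT x t, hpvXX x t, hvW (x, t)]
  simp only
  rw [hwave' (g x) t]
  have hrx : r x = deriv Sd x / S x - 2 * (Sd x / S x) ^ 2 := by
    rw [hr x, hderivderivS, hderivS]
  rw [hrx]
  have hA4 : c (g x) = (S x ^ 4)⁻¹ := hS4A x
  rw [hA4, hWSinv x, hWd_def, hWdd_def]
  simp only
  have hs : S x ≠ 0 := hSne x
  field_simp
  ring
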